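/- arXiv:2605.18315 — 4 statements merged into one kernel-verified Lean document; each statement's English description precedes it below -/
import Mathlib

section
/- Define R(μ) = tr(Σ) − 2λ b(μ) + λ² a(μ) b(μ) where a(μ) = μᵀΣμ and b(μ) = μᵀΣ²μ, with λ > 0 and Σ symmetric positive definite with distinct eigenvalues σ₁ > ⋯ > σ_d > 0 and unit eigenvectors u₁,…,u_d. Then the set of critical points of R is exactly {0} ∪ {± u_j/√(λσ_j) : j = 1,…,d}. -/
open Matrix

noncomputable def dCLM {d : ℕ} (w : Fin d → ℝ) : (Fin d → ℝ) →L[ℝ] ℝ :=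
  ∑ i, w i • (ContinuousLinearMap.proj i : (Fin d → ℝ) →L[ℝ] ℝ)

@[simp] lemma dCLM_apply {d : ℕ} (w v : Fin d → ℝ) : dCLM w v = w ⬝ᵥ v := by
  simp [dCLM, dotProduct]

lemma dCLM_eq_zero {d : ℕ} {w : Fin d → ℝ} (h : dCLM w = 0) : w = 0 := by
  funext i
  have := congrArg (fun L : (Fin d → ℝ) →L[ℝ] ℝ => L (Pi.single i 1)) h
  simpa [dotProduct_single] using this

lemma dot_sum {d : ℕ} {ι : Type*} (v : Fin d → ℝ) (s : Finset ι) (w : ι → Fin d → ℝ) :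
    v ⬝ᵥ (∑ k ∈ s, w k) = ∑ k ∈ s, v ⬝ᵥ w k := by
  simp only [dotProduct, Finset.sum_apply, Finset.mul_sum]
  rw [Finset.sum_comm]

lemma quad_hasFDerivAt {d : ℕ} (M : Matrix (Fin d) (Fin d) ℝ) (μ : Fin d → ℝ) :
    HasFDerivAt (fun x => x ⬝ᵥ (M *ᵥ x)) (dCLM (Mᵀ *ᵥ μ + M *ᵥ μ)) μ := by
  have h : (fun x : Fin d → ℝ => x ⬝ᵥ (M *ᵥ x))
      = fun x => ∑ i, ((ContinuousLinearMap.proj i : (Fin d → ℝ) →L[ℝ] ℝ) x) * (dCLM (M i) x) := by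
    funext x; simp [dotProduct, mulVec]
  rw [h]
  have H := HasFDerivAt.fun_sum (u := Finset.univ)
    (fun i _ => ((ContinuousLinearMap.proj (R := ℝ) (φ := fun _ : Fin d => ℝ) i).hasFDerivAt (x := μ)).mul
      ((dCLM (M i)).hasFDerivAt (x := μ)))
  refine H.congr_fderiv ?_
  symm
  ext v
  simp [dotProduct, mulVec, add_dotProduct, Finset.sum_add_distrib, transpose, vecMul]
  simp only [add_mul, Finset.sum_add_distrib, Finset.sum_mul, Finset.mul_sum]
  congr 1
  rw [Finset.sum_comm]
  apply Finset.sum_congr rfl; intro i _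
  apply Finset.sum_congr rfl; intro j _
  ring

theorem stmt_4 {d : ℕ}
    (S : Matrix (Fin d) (Fin d) ℝ) (hS : S.PosDef)
    (l : ℝ) (hl : 0 < l)
    (σ : Fin d → ℝ) (u : Fin d → Fin d → ℝ)
    (hσpos : ∀ j, 0 < σ j) (hσanti : StrictAnti σ)
    (heig : ∀ j, S *ᵥ u j = σ j • u j)
    (hunit : ∀ j, u j ⬝ᵥ u j = 1)
    (R : (Fin d → ℝ) → ℝ)
    (hR : ∀ x, R x = S.trace - 2 * l * (x ⬝ᵥ ((S * S) *ᵥ x))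
        + l ^ 2 * (x ⬝ᵥ (S *ᵥ x)) * (x ⬝ᵥ ((S * S) *ᵥ x))) :
    {μ : Fin d → ℝ | fderiv ℝ R μ = 0}
      = {0} ∪ ⋃ j, {(Real.sqrt (l * σ j))⁻¹ • u j,
          -((Real.sqrt (l * σ j))⁻¹ • u j)} := by
  set A := S * S with hA
  have hSt : Sᵀ = S := hS.1
  have hAt : Aᵀ = A := by rw [hA, transpose_mul, hSt]
  have hsd : ∀ (M : Matrix (Fin d) (Fin d) ℝ), Mᵀ = M → ∀ x y : Fin d → ℝ,
      (M *ᵥ x) ⬝ᵥ y = x ⬝ᵥ (M *ᵥ y) := by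
    intro M hM x y
    rw [Matrix.dotProduct_mulVec, ← Matrix.mulVec_transpose, hM]
  have hAu : ∀ j, A *ᵥ u j = (σ j ^ 2) • u j := by
    intro j
    rw [hA, ← Matrix.mulVec_mulVec, heig, Matrix.mulVec_smul, heig, smul_smul]
    ring_nf
  -- the key characterization of critical points
  have key : ∀ μ : Fin d → ℝ, (fderiv ℝ R μ = 0 ↔
      (l * (μ ⬝ᵥ (S *ᵥ μ)) - 2) • (A *ᵥ μ) + (l * (μ ⬝ᵥ (A *ᵥ μ))) • (S *ᵥ μ) = 0) := by
    intro μ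
    have h1 := quad_hasFDerivAt A μ
    have h2 := quad_hasFDerivAt S μ
    have hc : HasFDerivAt (fun _ : Fin d → ℝ => S.trace) (0 : (Fin d → ℝ) →L[ℝ] ℝ) μ :=
      hasFDerivAt_const _ _
    have hRe : R = fun x => S.trace - 2 * l * (x ⬝ᵥ (A *ᵥ x))
        + (l ^ 2 * (x ⬝ᵥ (S *ᵥ x))) * (x ⬝ᵥ (A *ᵥ x)) := funext hR
    have H : HasFDerivAt R
        ((0 - (2 * l) • dCLM (Aᵀ *ᵥ μ + A *ᵥ μ))
          + ((l ^ 2 * (μ ⬝ᵥ (S *ᵥ μ))) • dCLM (Aᵀ *ᵥ μ + A *ᵥ μ)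
              + (μ ⬝ᵥ (A *ᵥ μ)) • (l ^ 2 • dCLM (Sᵀ *ᵥ μ + S *ᵥ μ)))) μ := by
      rw [hRe]
      exact (hc.sub (h1.const_mul (2 * l))).add ((h2.const_mul (l ^ 2)).mul h1)
    have hfd := H.fderiv
    have hD : fderiv ℝ R μ
        = dCLM ((2 * l) • ((l * (μ ⬝ᵥ (S *ᵥ μ)) - 2) • (A *ᵥ μ)
            + (l * (μ ⬝ᵥ (A *ᵥ μ))) • (S *ᵥ μ))) := by
      rw [hfd]; ext v
      simp only [ContinuousLinearMap.add_apply, ContinuousLinearMap.sub_apply,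
        ContinuousLinearMap.smul_apply, ContinuousLinearMap.zero_apply, dCLM_apply,
        hAt, hSt, add_dotProduct, smul_dotProduct, smul_eq_mul]
      ring
    rw [hD]
    have h2l : (2 * l) ≠ 0 := by linarith
    constructor
    · intro h
      exact (smul_eq_zero.mp (dCLM_eq_zero h)).resolve_left h2l
    · intro h
      rw [h, smul_zero]
      ext v; simp
  -- orthogonality
  have horth : ∀ i j, i ≠ j → u i ⬝ᵥ u j = 0 := by
    intro i j hij
    have h1 : σ i * (u i ⬝ᵥ u j) = σ j * (u i ⬝ᵥ u j) := by
      calc σ i * (u i ⬝ᵥ u j) = (σ i • u i) ⬝ᵥ u j := by simp [smul_dotProduct]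
        _ = (S *ᵥ u i) ⬝ᵥ u j := by rw [heig]
        _ = u i ⬝ᵥ (S *ᵥ u j) := hsd S hSt _ _
        _ = u i ⬝ᵥ (σ j • u j) := by rw [heig]
        _ = σ j * (u i ⬝ᵥ u j) := by simp [dotProduct_smul]
    have hσ : σ i ≠ σ j := fun h => hij (hσanti.injective h)
    have h2 := sub_eq_zero.mpr h1
    rw [← sub_mul] at h2
    rcases mul_eq_zero.mp h2 with h | h
    · exact absurd (sub_eq_zero.mp h) hσ
    · exact h
  -- now the set equality
  ext μ
  simp only [Set.mem_setOf_eq, Set.mem_union, Set.mem_singleton_iff, Set.mem_iUnion,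
    Set.mem_insert_iff, key μ]
  constructor
  · intro hg
    by_cases hμ : μ = 0
    · exact Or.inl hμ
    right
    -- Fin d is nonempty since μ ≠ 0
    have hd : Nonempty (Fin d) := by
      by_contra hne
      exact hμ (funext fun i => absurd ⟨i⟩ hne)
    -- eigenbasis expansion
    have hli : LinearIndependent ℝ u := by
      rw [linearIndependent_iff']
      intro s g hsum i hi
      have h0 : u i ⬝ᵥ (∑ k ∈ s, g k • u k) = 0 := by rw [hsum]; simp
      rw [dot_sum, Finset.sum_eq_single i
        (fun k _ hk => by simp [dotProduct_smul, horth i k (Ne.symm hk)])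
        (fun h => absurd hi h)] at h0
      simpa [dotProduct_smul, hunit i] using h0
    have hcard : Fintype.card (Fin d) = Module.finrank ℝ (Fin d → ℝ) := by
      simp [Module.finrank_fin_fun]
    set B := basisOfLinearIndependentOfCardEqFinrank hli hcard with hBdef
    have hBcoe : ∀ k, B k = u k := fun k => by
      rw [hBdef, coe_basisOfLinearIndependentOfCardEqFinrank]
    have hexp : μ = ∑ k, (u k ⬝ᵥ μ) • u k := by
      have h1 : μ = ∑ k, B.repr μ k • u k := by
        conv_lhs => rw [← B.sum_repr μ]
        exact Finset.sum_congr rfl fun k _ => by rw [hBcoe]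
      have h2 : ∀ j, u j ⬝ᵥ μ = B.repr μ j := by
        intro j
        conv_lhs => rw [h1]
        rw [dot_sum, Finset.sum_eq_single j
          (fun k _ hk => by simp [dotProduct_smul, horth j k (Ne.symm hk)])
          (by simp)]
        simp [dotProduct_smul, hunit j]
      conv_lhs => rw [h1]
      exact Finset.sum_congr rfl fun k _ => by rw [h2]
    set a := μ ⬝ᵥ (S *ᵥ μ) with ha
    set b := μ ⬝ᵥ (A *ᵥ μ) with hb
    -- coordinate equations
    have hcoord : ∀ j, (u j ⬝ᵥ μ) = 0 ∨ (l * a - 2) * σ j + l * b = 0 := by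
      intro j
      have h0 : u j ⬝ᵥ ((l * a - 2) • (A *ᵥ μ) + (l * b) • (S *ᵥ μ)) = 0 := by rw [hg]; simp
      have e1 : u j ⬝ᵥ (A *ᵥ μ) = σ j ^ 2 * (u j ⬝ᵥ μ) := by
        rw [← hsd A hAt, hAu, smul_dotProduct, smul_eq_mul]
      have e2 : u j ⬝ᵥ (S *ᵥ μ) = σ j * (u j ⬝ᵥ μ) := by
        rw [← hsd S hSt, heig, smul_dotProduct, smul_eq_mul]
      rw [dotProduct_add, dotProduct_smul, dotProduct_smul, e1, e2] at h0
      have h0' : (u j ⬝ᵥ μ) * (σ j * ((l * a - 2) * σ j + l * b)) = 0 := by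
        rw [← h0]; simp only [smul_eq_mul]; ring
      rcases mul_eq_zero.mp h0' with h | h
      · exact Or.inl h
      · rcases mul_eq_zero.mp h with h' | h'
        · exact absurd h' (ne_of_gt (hσpos j))
        · exact Or.inr h'
    -- there is some nonzero coordinate
    have hex : ∃ j, u j ⬝ᵥ μ ≠ 0 := by
      by_contra hno
      push_neg at hno
      apply hμ
      rw [hexp]
      exact Finset.sum_eq_zero fun k _ => by rw [hno k, zero_smul]
    obtain ⟨j, hj⟩ := hex
    have hPj : (l * a - 2) * σ j + l * b = 0 := (hcoord j).resolve_left hj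
    -- uniqueness of the nonzero coordinate
    have huniq : ∀ k, k ≠ j → u k ⬝ᵥ μ = 0 := by
      intro k hk
      by_contra hck
      have hPk : (l * a - 2) * σ k + l * b = 0 := (hcoord k).resolve_left hck
      have hla : l * a - 2 = 0 := by
        have hσ : σ j ≠ σ k := fun h => hk ((hσanti.injective h).symm)
        have h3 : (l * a - 2) * (σ j - σ k) = 0 := by linarith [hPj, hPk]
        rcases mul_eq_zero.mp h3 with h | h
        · exact h
        · exact absurd (sub_eq_zero.mp h) hσ
      have hbz : b = 0 := by
        rw [hla, zero_mul, zero_add] at hPj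
        rcases mul_eq_zero.mp hPj with h | h
        · exact absurd h (ne_of_gt hl)
        · exact h
      have haz : a ≠ 0 := by
        intro h; rw [h] at hla; norm_num at hla
      have hSμ : S *ᵥ μ ≠ 0 := by
        intro h; apply haz; rw [ha, h, dotProduct_zero]
      have hbval : b = (S *ᵥ μ) ⬝ᵥ (S *ᵥ μ) := by
        rw [hb, hA, ← Matrix.mulVec_mulVec, ← hsd S hSt]
      rw [hbz] at hbval
      exact hSμ ((dotProduct_self_eq_zero).mp hbval.symm)
    -- so μ = c • u j
    set c := u j ⬝ᵥ μ with hc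
    have hμeq : μ = c • u j := by
      conv_lhs => rw [hexp]
      rw [Finset.sum_eq_single j (fun k _ hk => by rw [huniq k hk, zero_smul]) (by simp)]
    have haval : a = c ^ 2 * σ j := by
      rw [ha, hμeq, Matrix.mulVec_smul, heig, smul_dotProduct, dotProduct_smul,
        dotProduct_smul, hunit j]
      simp only [smul_eq_mul]; ring
    have hbval : b = c ^ 2 * σ j ^ 2 := by
      rw [hb, hμeq, Matrix.mulVec_smul, hAu, smul_dotProduct, dotProduct_smul,
        dotProduct_smul, hunit j]
      simp only [smul_eq_mul]; ring
    have hlσ : (0:ℝ) < l * σ j := mul_pos hl (hσpos j)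
    have hc21 : c ^ 2 * (l * σ j) = 1 := by
      have h4 : 2 * σ j * (c ^ 2 * (l * σ j) - 1) = 0 := by
        rw [haval, hbval] at hPj
        linear_combination hPj
      rcases mul_eq_zero.mp h4 with h | h
      · exact absurd h (ne_of_gt (by linarith [hσpos j]))
      · linarith [sub_eq_zero.mp h]
    set r := (Real.sqrt (l * σ j))⁻¹ with hr
    have hr21 : r ^ 2 * (l * σ j) = 1 := by
      rw [hr, inv_pow, Real.sq_sqrt hlσ.le]
      field_simp
      exact div_self (ne_of_gt (hσpos j))
    refine ⟨j, ?_⟩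
    have hdiff : (c - r) * (c + r) = 0 := by
      have h5 : (c ^ 2 - r ^ 2) * (l * σ j) = 0 := by rw [sub_mul, hc21, hr21]; ring
      have h6 : c ^ 2 - r ^ 2 = 0 := by
        rcases mul_eq_zero.mp h5 with h | h
        · exact h
        · exact absurd h (ne_of_gt hlσ)
      linear_combination h6
    rcases mul_eq_zero.mp hdiff with h | h
    · left; rw [hμeq, sub_eq_zero.mp h]
    · right; rw [hμeq, ← neg_smul]
      congr 1
      linarith [h]
  · intro h
    rcases h with h | ⟨j, h⟩
    · rw [h]; simp
    have hlσ : (0:ℝ) < l * σ j := mul_pos hl (hσpos j)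
    have hr2 : ((Real.sqrt (l * σ j))⁻¹) ^ 2 * (l * σ j) = 1 := by
      rw [inv_pow, Real.sq_sqrt hlσ.le]
      field_simp
      exact div_self (ne_of_gt (hσpos j))
    obtain ⟨cc, hcc2, hμeq⟩ : ∃ cc : ℝ, cc ^ 2 * (l * σ j) = 1 ∧ μ = cc • u j := by
      rcases h with h | h
      · exact ⟨(Real.sqrt (l * σ j))⁻¹, hr2, h⟩
      · exact ⟨-(Real.sqrt (l * σ j))⁻¹, by rw [neg_pow]; simpa using hr2, by
          rw [h, neg_smul]⟩
    rw [hμeq]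
    have haval : (cc • u j) ⬝ᵥ (S *ᵥ (cc • u j)) = cc ^ 2 * σ j := by
      rw [Matrix.mulVec_smul, heig, smul_dotProduct, dotProduct_smul, dotProduct_smul, hunit j]
      simp only [smul_eq_mul]; ring
    have hbval : (cc • u j) ⬝ᵥ (A *ᵥ (cc • u j)) = cc ^ 2 * σ j ^ 2 := by
      rw [Matrix.mulVec_smul, hAu, smul_dotProduct, dotProduct_smul, dotProduct_smul, hunit j]
      simp only [smul_eq_mul]; ring
    rw [haval, hbval, Matrix.mulVec_smul, hAu, Matrix.mulVec_smul, heig]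
    rw [smul_smul, smul_smul, smul_smul, smul_smul, ← add_smul]
    convert zero_smul ℝ (u j)
    linear_combination (2 * cc * σ j ^ 2) * hcc2
end

section
/- With R(μ) = tr(Σ) − 2λ μᵀΣ²μ + λ²(μᵀΣμ)(μᵀΣ²μ), λ > 0, Σ symmetric positive definite with simple spectrum σ₁ > ⋯ > σ_d > 0 and unit eigenvectors u_j: at the critical point μ* = u_j/√(λσ_j), for any eigenvector w of Σ with eigenvalue τ ≠ σ_j one has ∇²R(μ*) w = 2λτ(σ_j − τ) w, and ∇²R(μ*) u_j = 8λσ_j² u_j. -/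
open Matrix

noncomputable def bilCLM {d : ℕ} (A : Matrix (Fin d) (Fin d) ℝ) :
    (Fin d → ℝ) →L[ℝ] (Fin d → ℝ) →L[ℝ] ℝ :=
  LinearMap.toContinuousLinearMap
    { toFun := fun x => LinearMap.toContinuousLinearMap
        { toFun := fun y => x ⬝ᵥ (A *ᵥ y)
          map_add' := by intro a b; simp [mulVec_add, dotProduct_add]
          map_smul' := by intro c a; simp [mulVec_smul] }
      map_add' := by intro a b; ext y; simp [add_dotProduct]
      map_smul' := by intro c a; ext y; simp [smul_dotProduct] }

@[simp] lemma bilCLM_apply {d : ℕ} (A : Matrix (Fin d) (Fin d) ℝ) (x y : Fin d → ℝ) :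
    bilCLM A x y = x ⬝ᵥ (A *ᵥ y) := rfl

lemma hasFDerivAt_quad {d : ℕ} (A : Matrix (Fin d) (Fin d) ℝ) (x : Fin d → ℝ) :
    HasFDerivAt (fun y => y ⬝ᵥ (A *ᵥ y))
      ((bilCLM A x).comp (ContinuousLinearMap.id ℝ _) + (bilCLM A).flip x) x := by
  have h := ((bilCLM A).hasFDerivAt (x := x)).clm_apply (hasFDerivAt_id x)
  simpa using h

lemma fderiv_R_apply {d : ℕ} (S : Matrix (Fin d) (Fin d) ℝ) (l : ℝ)
    (R : (Fin d → ℝ) → ℝ)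
    (hR : ∀ x, R x = S.trace - 2 * l * (x ⬝ᵥ ((S * S) *ᵥ x))
        + l ^ 2 * (x ⬝ᵥ (S *ᵥ x)) * (x ⬝ᵥ ((S * S) *ᵥ x)))
    (x z : Fin d → ℝ) :
    fderiv ℝ R x z =
      -(2*l)*(x ⬝ᵥ ((S*S) *ᵥ z) + z ⬝ᵥ ((S*S) *ᵥ x))
      + (l^2*(x ⬝ᵥ (S *ᵥ x)) * (x ⬝ᵥ ((S*S) *ᵥ z) + z ⬝ᵥ ((S*S) *ᵥ x))
         + (x ⬝ᵥ ((S*S) *ᵥ x)) * (l^2 * (x ⬝ᵥ (S *ᵥ z) + z ⬝ᵥ (S *ᵥ x)))) := by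
  have h0 : HasFDerivAt (fun y : Fin d → ℝ => S.trace - 2*l*(y ⬝ᵥ ((S*S) *ᵥ y)))
      (0 - (2*l) • ((bilCLM (S*S) x).comp (ContinuousLinearMap.id ℝ _) + (bilCLM (S*S)).flip x)) x :=
    (hasFDerivAt_const _ _).sub ((hasFDerivAt_quad (S*S) x).const_mul (2*l))
  have hm : HasFDerivAt (fun y : Fin d → ℝ => l^2*(y ⬝ᵥ (S *ᵥ y)))
      ((l^2) • ((bilCLM S x).comp (ContinuousLinearMap.id ℝ _) + (bilCLM S).flip x)) x :=
    (hasFDerivAt_quad S x).const_mul (l^2)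
  have h1 := hm.mul (hasFDerivAt_quad (S*S) x)
  have hfull := h0.add h1
  have hRe : R = fun y : Fin d → ℝ => (S.trace - 2*l*(y ⬝ᵥ ((S*S) *ᵥ y)))
      + (l^2*(y ⬝ᵥ (S *ᵥ y))) * (y ⬝ᵥ ((S*S) *ᵥ y)) := by
    funext y; rw [hR y]
  rw [hRe]
  rw [HasFDerivAt.fderiv (f := fun y : Fin d → ℝ => (S.trace - 2*l*(y ⬝ᵥ ((S*S) *ᵥ y)))
      + (l^2*(y ⬝ᵥ (S *ᵥ y))) * (y ⬝ᵥ ((S*S) *ᵥ y))) hfull]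
  simp
  ring

lemma key {d : ℕ} (S : Matrix (Fin d) (Fin d) ℝ) (l : ℝ)
    (R : (Fin d → ℝ) → ℝ)
    (hR : ∀ x, R x = S.trace - 2 * l * (x ⬝ᵥ ((S * S) *ᵥ x))
        + l ^ 2 * (x ⬝ᵥ (S *ᵥ x)) * (x ⬝ᵥ ((S * S) *ᵥ x)))
    (μ w z : Fin d → ℝ) :
    fderiv ℝ (fun x => fderiv ℝ R x z) μ w =
      -(2*l)*(w ⬝ᵥ ((S*S) *ᵥ z) + z ⬝ᵥ ((S*S) *ᵥ w))
      + l^2*( (w ⬝ᵥ (S *ᵥ z) + z ⬝ᵥ (S *ᵥ w)) * (μ ⬝ᵥ ((S*S) *ᵥ μ))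
            + (μ ⬝ᵥ (S *ᵥ z) + z ⬝ᵥ (S *ᵥ μ)) * (μ ⬝ᵥ ((S*S) *ᵥ w) + w ⬝ᵥ ((S*S) *ᵥ μ))
            + (μ ⬝ᵥ (S *ᵥ w) + w ⬝ᵥ (S *ᵥ μ)) * (μ ⬝ᵥ ((S*S) *ᵥ z) + z ⬝ᵥ ((S*S) *ᵥ μ))
            + (μ ⬝ᵥ (S *ᵥ μ)) * (w ⬝ᵥ ((S*S) *ᵥ z) + z ⬝ᵥ ((S*S) *ᵥ w)) ) := by
  have hgz : (fun x => fderiv ℝ R x z) = fun x : Fin d → ℝ =>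
      -(2*l)*(x ⬝ᵥ ((S*S) *ᵥ z) + z ⬝ᵥ ((S*S) *ᵥ x))
      + (l^2*(x ⬝ᵥ (S *ᵥ x)) * (x ⬝ᵥ ((S*S) *ᵥ z) + z ⬝ᵥ ((S*S) *ᵥ x))
         + (x ⬝ᵥ ((S*S) *ᵥ x)) * (l^2 * (x ⬝ᵥ (S *ᵥ z) + z ⬝ᵥ (S *ᵥ x)))) :=
    funext (fderiv_R_apply S l R hR · z)
  rw [hgz]
  have hA : HasFDerivAt (fun x : Fin d → ℝ => x ⬝ᵥ ((S*S) *ᵥ z)) ((bilCLM (S*S)).flip z) μ :=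
    ((bilCLM (S*S)).flip z).hasFDerivAt
  have hB : HasFDerivAt (fun x : Fin d → ℝ => z ⬝ᵥ ((S*S) *ᵥ x)) (bilCLM (S*S) z) μ :=
    (bilCLM (S*S) z).hasFDerivAt
  have hC : HasFDerivAt (fun x : Fin d → ℝ => x ⬝ᵥ (S *ᵥ z)) ((bilCLM S).flip z) μ :=
    ((bilCLM S).flip z).hasFDerivAt
  have hD : HasFDerivAt (fun x : Fin d → ℝ => z ⬝ᵥ (S *ᵥ x)) (bilCLM S z) μ :=
    (bilCLM S z).hasFDerivAt
  have big := (((hA.add hB).const_mul (-(2*l))).add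
    ((((hasFDerivAt_quad S μ).const_mul (l^2)).mul (hA.add hB)).add
      ((hasFDerivAt_quad (S*S) μ).mul ((hC.add hD).const_mul (l^2)))))
  rw [HasFDerivAt.fderiv (f := fun x : Fin d → ℝ =>
      -(2*l)*(x ⬝ᵥ ((S*S) *ᵥ z) + z ⬝ᵥ ((S*S) *ᵥ x))
      + (l^2*(x ⬝ᵥ (S *ᵥ x)) * (x ⬝ᵥ ((S*S) *ᵥ z) + z ⬝ᵥ ((S*S) *ᵥ x))
         + (x ⬝ᵥ ((S*S) *ᵥ x)) * (l^2 * (x ⬝ᵥ (S *ᵥ z) + z ⬝ᵥ (S *ᵥ x))))) big]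
  simp
  ring

theorem stmt_6 {d : ℕ}
    (S : Matrix (Fin d) (Fin d) ℝ) (hS : S.PosDef)
    (l : ℝ) (hl : 0 < l)
    (σ : Fin d → ℝ) (u : Fin d → Fin d → ℝ)
    (hσpos : ∀ j, 0 < σ j) (hσanti : StrictAnti σ)
    (heig : ∀ j, S *ᵥ u j = σ j • u j)
    (hunit : ∀ j, u j ⬝ᵥ u j = 1)
    (R : (Fin d → ℝ) → ℝ)
    (hR : ∀ x, R x = S.trace - 2 * l * (x ⬝ᵥ ((S * S) *ᵥ x))
        + l ^ 2 * (x ⬝ᵥ (S *ᵥ x)) * (x ⬝ᵥ ((S * S) *ᵥ x)))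
    (j : Fin d) :
    (∀ (w : Fin d → ℝ) (τ : ℝ), w ≠ 0 → S *ᵥ w = τ • w → τ ≠ σ j →
        ∀ z : Fin d → ℝ,
          fderiv ℝ (fun x => fderiv ℝ R x z) ((Real.sqrt (l * σ j))⁻¹ • u j) w
            = 2 * l * τ * (σ j - τ) * (w ⬝ᵥ z))
    ∧ ∀ z : Fin d → ℝ,
        fderiv ℝ (fun x => fderiv ℝ R x z) ((Real.sqrt (l * σ j))⁻¹ • u j) (u j)
          = 8 * l * (σ j) ^ 2 * (u j ⬝ᵥ z) := by
  have hls : 0 < l * σ j := mul_pos hl (hσpos j)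
  set c : ℝ := (Real.sqrt (l * σ j))⁻¹ with hcdef
  have hc2 : c * c = (l * σ j)⁻¹ := by
    rw [hcdef, ← mul_inv, Real.mul_self_sqrt hls.le]
  have hc2' : c * c * (l * σ j) = 1 := by rw [hc2]; exact inv_mul_cancel₀ hls.ne'
  have hSt : Sᵀ = S := by
    have := hS.isHermitian
    rw [Matrix.IsHermitian] at this
    simpa using this
  have hS2t : (S*S)ᵀ = S*S := by rw [Matrix.transpose_mul, hSt]
  have hsym : ∀ (A : Matrix (Fin d) (Fin d) ℝ), Aᵀ = A → ∀ x y : Fin d → ℝ,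
      x ⬝ᵥ (A *ᵥ y) = y ⬝ᵥ (A *ᵥ x) := by
    intro A hA x y
    rw [Matrix.dotProduct_mulVec, ← Matrix.mulVec_transpose, hA, dotProduct_comm]
  have hSu : S *ᵥ u j = σ j • u j := heig j
  have hS2u : (S*S) *ᵥ u j = (σ j * σ j) • u j := by
    rw [← Matrix.mulVec_mulVec, hSu, Matrix.mulVec_smul, hSu, smul_smul]
  constructor
  · intro w τ hw0 hwe hτ z
    have hS2w : (S*S) *ᵥ w = (τ * τ) • w := by
      rw [← Matrix.mulVec_mulVec, hwe, Matrix.mulVec_smul, hwe, smul_smul]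
    have ho : u j ⬝ᵥ w = 0 := by
      have h1 : u j ⬝ᵥ (S *ᵥ w) = τ * (u j ⬝ᵥ w) := by rw [hwe, dotProduct_smul, smul_eq_mul]
      have h2 : u j ⬝ᵥ (S *ᵥ w) = σ j * (u j ⬝ᵥ w) := by
        rw [hsym S hSt, hSu, dotProduct_smul, smul_eq_mul, dotProduct_comm]
      have h3 : (τ - σ j) * (u j ⬝ᵥ w) = 0 := by rw [sub_mul, ← h1, ← h2]; ring
      rcases mul_eq_zero.mp h3 with h | h
      · exact absurd (sub_eq_zero.mp h) hτ
      · exact h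
    have ho' : w ⬝ᵥ u j = 0 := by rw [dotProduct_comm]; exact ho
    rw [key S l R hR]
    rw [hsym (S*S) hS2t w z, hsym S hSt w z, hsym (S*S) hS2t (c • u j) z,
        hsym S hSt (c • u j) z]
    simp only [Matrix.mulVec_smul, smul_dotProduct, dotProduct_smul, hSu, hS2u, hS2w, hwe,
      hunit j, ho, ho', smul_eq_mul, mul_zero, zero_mul, mul_one, add_zero, zero_add]
    rw [dotProduct_comm z w]
    linear_combination ((2 * l * τ * σ j + 2 * l * τ ^ 2) * (w ⬝ᵥ z)) * hc2'
  · intro z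
    rw [key S l R hR]
    rw [hsym (S*S) hS2t (u j) z, hsym S hSt (u j) z, hsym (S*S) hS2t (c • u j) z,
        hsym S hSt (c • u j) z]
    simp only [Matrix.mulVec_smul, smul_dotProduct, dotProduct_smul, hSu, hS2u,
      hunit j, smul_eq_mul]
    rw [show z ⬝ᵥ u j = u j ⬝ᵥ z from dotProduct_comm z (u j)]
    linear_combination (12 * l * σ j ^ 2 * (u j ⬝ᵥ z)) * hc2'
end

section
/- With R(μ) = tr(Σ) − 2λ μᵀΣ²μ + λ²(μᵀΣμ)(μᵀΣ²μ) and Σ symmetric positive definite with largest eigenvalue σ₁ and unit eigenvector u₁, λ > 0: the points ± u₁/√(λσ₁) are global minimizers of R, and the minimum value of R equals tr(Σ) − σ₁. -/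
open Matrix

lemma dot_mulVec_eq {d : ℕ} (A : Matrix (Fin d) (Fin d) ℝ) (v w : Fin d → ℝ) :
    v ⬝ᵥ (A *ᵥ w) = (Aᵀ *ᵥ v) ⬝ᵥ w := by
  rw [dotProduct_mulVec, mulVec_transpose]

lemma quad_form_le_aux {d : ℕ} (S : Matrix (Fin d) (Fin d) ℝ) (hH : S.IsHermitian)
    (σ₁ : ℝ) (hev : ∀ i, hH.eigenvalues i ≤ σ₁) (y : Fin d → ℝ) :
    y ⬝ᵥ (S *ᵥ y) ≤ σ₁ * (y ⬝ᵥ y) := by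
  set U : Matrix (Fin d) (Fin d) ℝ := (hH.eigenvectorUnitary : Matrix (Fin d) (Fin d) ℝ) with hU
  have hUt : Uᵀ = star U := by
    rw [star_eq_conjTranspose, conjTranspose_eq_transpose_of_trivial]
  set z : Fin d → ℝ := star U *ᵥ y with hz
  have hDiag : S = U * diagonal (RCLike.ofReal ∘ hH.eigenvalues) * star U :=
    hH.spectral_theorem
  have hq : y ⬝ᵥ (S *ᵥ y) = ∑ i, hH.eigenvalues i * z i ^ 2 := by
    conv_lhs => rw [hDiag, ← mulVec_mulVec, ← mulVec_mulVec,
      dot_mulVec_eq U y (diagonal (RCLike.ofReal ∘ hH.eigenvalues) *ᵥ (star U *ᵥ y)), hUt]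
    simp only [dotProduct, mulVec_diagonal, Function.comp_apply, RCLike.ofReal_real_eq_id,
      id_eq]
    exact Finset.sum_congr rfl fun i _ => by ring
  have hy : y ⬝ᵥ y = ∑ i, z i ^ 2 := by
    have hyz : U *ᵥ z = y := by
      rw [hz, mulVec_mulVec, (mem_unitaryGroup_iff).mp hH.eigenvectorUnitary.2, one_mulVec]
    have h2 : y ⬝ᵥ y = z ⬝ᵥ z := by
      conv_lhs => rw [← hyz, dot_mulVec_eq U (U *ᵥ z) z, hUt, mulVec_mulVec,
        (mem_unitaryGroup_iff').mp hH.eigenvectorUnitary.2, one_mulVec]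
    rw [h2]
    simp [dotProduct, sq]
  rw [hq, hy, Finset.mul_sum]
  exact Finset.sum_le_sum fun i _ => mul_le_mul_of_nonneg_right (hev i) (sq_nonneg _)

theorem stmt_7 {d : ℕ}
    (S : Matrix (Fin d) (Fin d) ℝ) (hS : S.PosDef)
    (l : ℝ) (hl : 0 < l)
    (σ₁ : ℝ) (u₁ : Fin d → ℝ)
    (heig : S *ᵥ u₁ = σ₁ • u₁) (hu₁ : u₁ ⬝ᵥ u₁ = 1)
    (hmax : ∀ (τ : ℝ) (w : Fin d → ℝ), w ≠ 0 → S *ᵥ w = τ • w → τ ≤ σ₁)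
    (R : (Fin d → ℝ) → ℝ)
    (hR : ∀ x, R x = S.trace - 2 * l * (x ⬝ᵥ ((S * S) *ᵥ x))
        + l ^ 2 * (x ⬝ᵥ (S *ᵥ x)) * (x ⬝ᵥ ((S * S) *ᵥ x))) :
    (∀ μ : Fin d → ℝ, R ((Real.sqrt (l * σ₁))⁻¹ • u₁) ≤ R μ)
    ∧ (∀ μ : Fin d → ℝ, R (-((Real.sqrt (l * σ₁))⁻¹ • u₁)) ≤ R μ)
    ∧ R ((Real.sqrt (l * σ₁))⁻¹ • u₁) = S.trace - σ₁ := by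
  have hu₁ne : u₁ ≠ 0 := by
    intro h; rw [h] at hu₁; simp at hu₁
  -- σ₁ > 0
  have hσpos : 0 < σ₁ := by
    have h1 := hS.dotProduct_mulVec_pos hu₁ne
    have h2 : star u₁ ⬝ᵥ (S *ᵥ u₁) = σ₁ := by
      rw [heig]
      simp only [star_trivial, dotProduct_smul, smul_eq_mul, hu₁, mul_one]
    simp only [h2] at h1
    simpa using h1
  have hlσ : 0 < l * σ₁ := mul_pos hl hσpos
  have hc2 : ((Real.sqrt (l * σ₁))⁻¹) ^ 2 = (l * σ₁)⁻¹ := by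
    rw [← Real.sqrt_inv, Real.sq_sqrt (inv_nonneg.2 hlσ.le)]
  -- eigenvalues bounded
  have hev : ∀ i, hS.1.eigenvalues i ≤ σ₁ := by
    intro i
    refine hmax _ _ ?_ (hS.1.mulVec_eigenvectorBasis i)
    intro h
    have h1 := hS.1.eigenvectorBasis.orthonormal.1 i
    have h0 : hS.1.eigenvectorBasis i = 0 := by simpa using h
    rw [h0, norm_zero] at h1
    exact one_ne_zero h1.symm
  -- sqrt of S
  set T : Matrix (Fin d) (Fin d) ℝ := open scoped MatrixOrder in CFC.sqrt S with hT
  have hTT : T * T = S := open scoped MatrixOrder in CFC.sqrt_mul_sqrt_self S hS.posSemidef.nonneg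
  have hTt : Tᵀ = T := by
    have h := open scoped MatrixOrder in (CFC.sqrt_nonneg S).posSemidef.1
    rw [← conjTranspose_eq_transpose_of_trivial]
    exact h
  -- quadratic form identities
  have hSdot : ∀ x : Fin d → ℝ, x ⬝ᵥ (S *ᵥ x) = (T *ᵥ x) ⬝ᵥ (T *ᵥ x) := by
    intro x
    rw [← hTT, ← mulVec_mulVec, dot_mulVec_eq, hTt]
  have hSSdot : ∀ x : Fin d → ℝ, x ⬝ᵥ ((S * S) *ᵥ x) = (T *ᵥ x) ⬝ᵥ (S *ᵥ (T *ᵥ x)) := by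
    intro x
    have h4 : S * S = T * (S * T) := by rw [← hTT]; simp only [mul_assoc]
    rw [h4, ← mulVec_mulVec, dot_mulVec_eq, hTt, ← mulVec_mulVec]
  -- lower bound for R
  have hlow : ∀ μ : Fin d → ℝ, S.trace - σ₁ ≤ R μ := by
    intro μ
    rw [hR]
    set y : Fin d → ℝ := T *ᵥ μ with hy
    set a : ℝ := y ⬝ᵥ y with ha
    set b : ℝ := y ⬝ᵥ (S *ᵥ y) with hb
    have ha0 : 0 ≤ a := by
      rw [ha]; exact Finset.sum_nonneg fun i _ => mul_self_nonneg _
    have hb0 : 0 ≤ b := by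
      have := hS.posSemidef.re_dotProduct_nonneg y
      simpa [hb] using this
    have hba : b ≤ σ₁ * a := quad_form_le_aux S hS.1 σ₁ hev y
    rw [hSdot, hSSdot, ← hy, ← ha, ← hb]
    rcases le_or_gt (l * a) 2 with h | h
    · nlinarith [mul_nonneg (mul_nonneg hl.le (sub_nonneg.2 hba)) (sub_nonneg.2 h),
        mul_nonneg hσpos.le (sq_nonneg (1 - l * a))]
    · nlinarith [mul_nonneg (mul_nonneg hl.le hb0) (by linarith : (0:ℝ) ≤ l * a - 2)]
  -- value at the minimizer
  set c : ℝ := (Real.sqrt (l * σ₁))⁻¹ with hc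
  have hS2u : (S * S) *ᵥ u₁ = (σ₁ ^ 2) • u₁ := by
    rw [← mulVec_mulVec, heig, mulVec_smul, heig, smul_smul, sq]
  have hval : R (c • u₁) = S.trace - σ₁ := by
    have e1 : (c • u₁) ⬝ᵥ (S *ᵥ (c • u₁)) = l⁻¹ := by
      rw [mulVec_smul, heig]
      simp only [smul_dotProduct, dotProduct_smul, smul_eq_mul, hu₁, mul_one]
      rw [show c * (σ₁ * c) = c ^ 2 * σ₁ by ring, hc2]
      field_simp
    have e2 : (c • u₁) ⬝ᵥ ((S * S) *ᵥ (c • u₁)) = σ₁ / l := by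
      rw [mulVec_smul, hS2u]
      simp only [smul_dotProduct, dotProduct_smul, smul_eq_mul, hu₁, mul_one]
      rw [show c * (σ₁ ^ 2 * c) = c ^ 2 * σ₁ ^ 2 by ring, hc2]
      field_simp
    rw [hR, e1, e2]
    field_simp
    ring
  refine ⟨fun μ => ?_, fun μ => ?_, hval⟩
  · rw [hval]; exact hlow μ
  · have hneg : R (-(c • u₁)) = R (c • u₁) := by
      rw [hR, hR]; simp [mulVec_neg, dotProduct_neg, neg_dotProduct]
    rw [hneg, hval]; exact hlow μ
end

section
/- Let f: R^d → R be C² and let x* be a nondegenerate critical point (∇f(x*) = 0 and ∇²f(x*) invertible). Then there exist C > 0 and a neighborhood U of x* such that ‖∇f(x)‖ ≥ C |f(x) − f(x*)|^{1/2} for all x ∈ U. -/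
set_option maxHeartbeats 1000000


theorem stmt_9 {d : ℕ}
    (f : EuclideanSpace ℝ (Fin d) → ℝ) (hf : ContDiff ℝ 2 f)
    (xstar : EuclideanSpace ℝ (Fin d))
    (hcrit : fderiv ℝ f xstar = 0)
    (hnd : Function.Bijective ⇑(fderiv ℝ (fderiv ℝ f) xstar)) :
    ∃ C > 0, ∃ U ∈ nhds xstar, ∀ x ∈ U,
      C * Real.sqrt |f x - f xstar| ≤ ‖fderiv ℝ f x‖ := by
  set g := fderiv ℝ f with hgdef
  set H := fderiv ℝ g xstar with hHdef
  have hg1 : ContDiff ℝ 1 g := hf.fderiv_right (by norm_num)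
  -- antilipschitz-type bound for H
  obtain ⟨c, hc, hcH⟩ : ∃ c > (0:ℝ), ∀ v : EuclideanSpace ℝ (Fin d), c * ‖v‖ ≤ ‖H v‖ := by
    let e : EuclideanSpace ℝ (Fin d) ≃ₗ[ℝ] (EuclideanSpace ℝ (Fin d) →L[ℝ] ℝ) := LinearEquiv.ofBijective H.toLinearMap hnd
    let e' : EuclideanSpace ℝ (Fin d) ≃L[ℝ] (EuclideanSpace ℝ (Fin d) →L[ℝ] ℝ) := e.toContinuousLinearEquiv
    set M : ℝ := ‖(e'.symm : (EuclideanSpace ℝ (Fin d) →L[ℝ] ℝ) →L[ℝ] EuclideanSpace ℝ (Fin d))‖ with hM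
    have hM0 : 0 ≤ M := by rw [hM]; exact norm_nonneg ((e'.symm : (EuclideanSpace ℝ (Fin d) →L[ℝ] ℝ) →L[ℝ] EuclideanSpace ℝ (Fin d)))
    refine ⟨(M + 1)⁻¹, by positivity, fun v => ?_⟩
    have h1 : ‖v‖ ≤ M * ‖H v‖ := by
      have : e'.symm (e' v) = v := e'.symm_apply_apply v
      have h2 : ‖e'.symm (e' v)‖ ≤ M * ‖e' v‖ :=
        (e'.symm : (EuclideanSpace ℝ (Fin d) →L[ℝ] ℝ) →L[ℝ] EuclideanSpace ℝ (Fin d)).le_opNorm (e' v)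
      rw [this] at h2
      have he : (e' v : EuclideanSpace ℝ (Fin d) →L[ℝ] ℝ) = H v := rfl
      rwa [he] at h2
    rw [inv_mul_le_iff₀ (by positivity)]
    calc ‖v‖ ≤ M * ‖H v‖ := h1
      _ ≤ (M + 1) * ‖H v‖ := by nlinarith [norm_nonneg (H v)]
  -- little-o estimate
  have hdiff : HasFDerivAt g H xstar := by
    rw [hHdef]
    exact ((hg1.differentiable (by norm_num)) xstar).hasFDerivAt
  have hlo := hdiff.isLittleO.def (half_pos hc)
  -- local Lipschitz bound for g
  obtain ⟨K, t, ht, hlip⟩ := (hg1.contDiffAt (x := xstar)).exists_lipschitzOnWith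
  obtain ⟨r, hr, hball⟩ := Metric.mem_nhds_iff.mp (Filter.inter_mem ht hlo)
  refine ⟨(c / 2) / Real.sqrt ((K : ℝ) + 1), by positivity, Metric.ball xstar r,
    Metric.ball_mem_nhds _ hr, fun x hx => ?_⟩
  have hxmem := hball hx
  have hxt : x ∈ t := hxmem.1
  have hxP : ‖g x - g xstar - H (x - xstar)‖ ≤ c / 2 * ‖x - xstar‖ := hxmem.2
  have hgx0 : g xstar = 0 := hcrit
  rw [hgx0, sub_zero] at hxP
  -- lower bound on gradient
  have hlow : c / 2 * ‖x - xstar‖ ≤ ‖g x‖ := by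
    have h1 : c * ‖x - xstar‖ ≤ ‖H (x - xstar)‖ := hcH _
    have h2 : ‖H (x - xstar)‖ ≤ ‖g x‖ + ‖g x - H (x - xstar)‖ := by
      have := norm_sub_le (g x) (g x - H (x - xstar))
      simpa using this
    linarith
  -- quadratic upper bound on |f x - f xstar|
  have hxd : ‖x - xstar‖ < r := by
    rw [← dist_eq_norm]; exact hx
  have hsub : Metric.closedBall xstar ‖x - xstar‖ ⊆ t := by
    intro y hy
    have : dist y xstar < r := lt_of_le_of_lt (Metric.mem_closedBall.mp hy) hxd
    exact (hball this).1
  have hbound : ∀ y ∈ Metric.closedBall xstar ‖x - xstar‖,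
      ‖fderiv ℝ f y‖ ≤ ((K : ℝ) + 1) * ‖x - xstar‖ := by
    intro y hy
    have hyt : y ∈ t := hsub hy
    have hxst : xstar ∈ t := by
      have : dist xstar xstar < r := by simpa using hr
      exact (hball this).1
    have h1 : dist (g y) (g xstar) ≤ (K : ℝ) * dist y xstar := hlip.dist_le_mul y hyt xstar hxst
    rw [hgx0, dist_zero_right] at h1
    calc ‖fderiv ℝ f y‖ = ‖g y‖ := rfl
      _ ≤ (K : ℝ) * dist y xstar := h1
      _ ≤ (K : ℝ) * ‖x - xstar‖ := by
          exact mul_le_mul_of_nonneg_left (Metric.mem_closedBall.mp hy) K.coe_nonneg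
      _ ≤ ((K : ℝ) + 1) * ‖x - xstar‖ := by nlinarith [norm_nonneg (x - xstar)]
  have hquad : ‖f x - f xstar‖ ≤ (((K : ℝ) + 1) * ‖x - xstar‖) * ‖x - xstar‖ := by
    have hconv : Convex ℝ (Metric.closedBall xstar ‖x - xstar‖) := convex_closedBall _ _
    have hdf : ∀ y ∈ Metric.closedBall xstar ‖x - xstar‖, DifferentiableAt ℝ f y :=
      fun y _ => (hf.differentiable (by norm_num)) y
    have hxs : x ∈ Metric.closedBall xstar ‖x - xstar‖ := by
      rw [Metric.mem_closedBall, dist_eq_norm]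
    have hxss : xstar ∈ Metric.closedBall xstar ‖x - xstar‖ :=
      Metric.mem_closedBall_self (norm_nonneg _)
    exact hconv.norm_image_sub_le_of_norm_fderiv_le hdf hbound hxss hxs
  -- combine
  have hsq : Real.sqrt |f x - f xstar| ≤ Real.sqrt ((K : ℝ) + 1) * ‖x - xstar‖ := by
    have h1 : |f x - f xstar| ≤ ((K : ℝ) + 1) * ‖x - xstar‖ ^ 2 := by
      rw [← Real.norm_eq_abs]
      calc ‖f x - f xstar‖ ≤ (((K : ℝ) + 1) * ‖x - xstar‖) * ‖x - xstar‖ := hquad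
        _ = ((K : ℝ) + 1) * ‖x - xstar‖ ^ 2 := by ring
    calc Real.sqrt |f x - f xstar| ≤ Real.sqrt (((K : ℝ) + 1) * ‖x - xstar‖ ^ 2) :=
          Real.sqrt_le_sqrt h1
      _ = Real.sqrt ((K : ℝ) + 1) * ‖x - xstar‖ := by
          rw [Real.sqrt_mul (by positivity), Real.sqrt_sq (norm_nonneg _)]
  have hKpos : (0:ℝ) < Real.sqrt ((K : ℝ) + 1) := Real.sqrt_pos.mpr (by positivity)
  calc (c / 2) / Real.sqrt ((K : ℝ) + 1) * Real.sqrt |f x - f xstar|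
      ≤ (c / 2) / Real.sqrt ((K : ℝ) + 1) * (Real.sqrt ((K : ℝ) + 1) * ‖x - xstar‖) := by
        apply mul_le_mul_of_nonneg_left hsq
        positivity
    _ = c / 2 * ‖x - xstar‖ := by
        rw [div_eq_mul_inv, mul_assoc, inv_mul_cancel_left₀ hKpos.ne']
    _ ≤ ‖g x‖ := hlow
end
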